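/- Let Ω ⊆ ℝ² be a bounded fully symmetric measurable set of positive measure and w a nonnegative measurable function on √Ω such that for each sign pair ε = (ε₁,ε₂) ∈ {−1/2, 1/2}² the weight w_ε(s,t) = s^{ε₁} t^{ε₂} w(s,t) has finite positive integral over √Ω. For each ε, let {P^ε_α}_{α ∈ A_ε} be a family of measurable functions on √Ω that is orthonormal with respect to the inner product ⟨f,g⟩_ε = b(w_ε) ∫_{√Ω} f g w_ε ds dt. Define on Ω the functions P^{EE}_α(u,v) = P^{(−1/2,−1/2)}_α(u²,v²); P^{OO}_α(u,v) = sqrt(b(w_{(1/2,1/2)})/b_W) · u v · P^{(1/2,1/2)}_α(u²,v²); P^{EO}_α(u,v) = sqrt(b(w_{(−1/2,1/2)})/b_W) · v · P^{(−1/2,1/2)}_α(u²,v²); and P^{OE}_α(u,v) = sqrt(b(w_{(1/2,−1/2)})/b_W) · u · P^{(1/2,−1/2)}_α(u²,v²). Then the combined family of all these functions is an orthonormal system with respect to the inner product ⟨F,G⟩_W = b_W ∫_Ω F G W du dv: within each of the four families the functions are orthonormal, and any two functions taken from two different families are orthogonal. -/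

import Mathlib

open MeasureTheory
open scoped Classical

noncomputable section

namespace FSOB

/-- The squaring map `(u,v) ↦ (u², v²)`. -/
def sqmap : ℝ × ℝ → ℝ × ℝ := fun p => (p.1 ^ 2, p.2 ^ 2)

/-- Diagonal continuous linear map. -/
def D (a b : ℝ) : ℝ × ℝ →L[ℝ] ℝ × ℝ :=
  (a • ContinuousLinearMap.fst ℝ ℝ ℝ).prod (b • ContinuousLinearMap.snd ℝ ℝ ℝ)

lemma D_det (a b : ℝ) : (D a b).det = a * b := by
  have h : (D a b).det = LinearMap.det ((D a b) : (ℝ × ℝ) →ₗ[ℝ] (ℝ × ℝ)) := rfl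
  rw [h, ← LinearMap.det_toMatrix (Module.Basis.finTwoProd ℝ), Matrix.det_fin_two]
  simp [LinearMap.toMatrix_apply, D, Module.Basis.finTwoProd]

lemma hasFDerivAt_sqmap (x : ℝ × ℝ) : HasFDerivAt sqmap (D (2 * x.1) (2 * x.2)) x := by
  have h1 := (hasFDerivAt_fst (𝕜 := ℝ) (p := x)).mul (hasFDerivAt_fst (𝕜 := ℝ) (p := x))
  have h2 := (hasFDerivAt_snd (𝕜 := ℝ) (p := x)).mul (hasFDerivAt_snd (𝕜 := ℝ) (p := x))
  have h := h1.prodMk h2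
  have hfe : sqmap = fun p : ℝ × ℝ => (p.1 * p.1, p.2 * p.2) := by
    funext p; simp [sqmap, sq]
  rw [hfe]
  refine h.congr_fderiv ?_
  ext p <;> simp [D] <;> ring

lemma injOn_sqmap {s : Set (ℝ × ℝ)} (hs : ∀ p ∈ s, 0 ≤ p.1 ∧ 0 ≤ p.2) :
    Set.InjOn sqmap s := by
  intro p hp q hq h
  have h1 : p.1 ^ 2 = q.1 ^ 2 := congrArg Prod.fst h
  have h2 : p.2 ^ 2 = q.2 ^ 2 := congrArg Prod.snd h
  exact Prod.ext ((sq_eq_sq₀ (hs p hp).1 (hs q hq).1).mp h1)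
    ((sq_eq_sq₀ (hs p hp).2 (hs q hq).2).mp h2)

lemma cov {s : Set (ℝ × ℝ)} (hs : MeasurableSet s) (hp : ∀ p ∈ s, 0 ≤ p.1 ∧ 0 ≤ p.2)
    (g : ℝ × ℝ → ℝ) :
    ∫ p in sqmap '' s, g p = ∫ p in s, |2 * p.1 * (2 * p.2)| * g (sqmap p) := by
  have h := integral_image_eq_integral_abs_det_fderiv_smul volume hs
    (fun x _ => (hasFDerivAt_sqmap x).hasFDerivWithinAt) (injOn_sqmap hp) g
  simpa [D_det, smul_eq_mul] using h

lemma covInt {s : Set (ℝ × ℝ)} (hs : MeasurableSet s) (hp : ∀ p ∈ s, 0 ≤ p.1 ∧ 0 ≤ p.2)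
    (g : ℝ × ℝ → ℝ) :
    IntegrableOn g (sqmap '' s) ↔
      IntegrableOn (fun p => |2 * p.1 * (2 * p.2)| * g (sqmap p)) s := by
  have h := integrableOn_image_iff_integrableOn_abs_det_fderiv_smul volume hs
    (fun x _ => (hasFDerivAt_sqmap x).hasFDerivWithinAt) (injOn_sqmap hp) g
  simpa [D_det, smul_eq_mul] using h

lemma measurableSet_sqmap_image {s : Set (ℝ × ℝ)} (hs : MeasurableSet s)
    (hp : ∀ p ∈ s, 0 ≤ p.1 ∧ 0 ≤ p.2) : MeasurableSet (sqmap '' s) := by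
  have h := measurableEmbedding_of_fderivWithin hs
    (fun x _ => (hasFDerivAt_sqmap x).hasFDerivWithinAt) (injOn_sqmap hp)
  have h2 := h.measurableSet_range
  rwa [Set.range_restrict] at h2

/-! Reflections -/

def r1 : ℝ × ℝ → ℝ × ℝ := fun p => (-p.1, p.2)
def r2 : ℝ × ℝ → ℝ × ℝ := fun p => (p.1, -p.2)

lemma r1_mp : MeasurePreserving r1 (volume : Measure (ℝ × ℝ)) volume := by
  rw [Measure.volume_eq_prod]
  exact (Measure.measurePreserving_neg (volume : Measure ℝ)).prod (MeasurePreserving.id _)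

lemma r2_mp : MeasurePreserving r2 (volume : Measure (ℝ × ℝ)) volume := by
  rw [Measure.volume_eq_prod]
  exact (MeasurePreserving.id _).prod (Measure.measurePreserving_neg (volume : Measure ℝ))

lemma r1_emb : MeasurableEmbedding r1 :=
  ((MeasurableEquiv.neg ℝ).prodCongr (MeasurableEquiv.refl ℝ)).measurableEmbedding

lemma r2_emb : MeasurableEmbedding r2 :=
  ((MeasurableEquiv.refl ℝ).prodCongr (MeasurableEquiv.neg ℝ)).measurableEmbedding

lemma setIntegral_r1 (S : Set (ℝ × ℝ)) (hsym : ∀ p ∈ S, (-p.1, p.2) ∈ S) (g : ℝ × ℝ → ℝ) :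
    ∫ p in S, g (-p.1, p.2) = ∫ p in S, g p := by
  have hpre : r1 ⁻¹' S = S := by
    ext p
    constructor
    · intro hp
      have := hsym _ hp
      simpa [r1] using this
    · intro hp; exact hsym _ hp
  have h := r1_mp.setIntegral_preimage_emb r1_emb g S
  rw [hpre] at h
  exact h

lemma setIntegral_r2 (S : Set (ℝ × ℝ)) (hsym : ∀ p ∈ S, (p.1, -p.2) ∈ S) (g : ℝ × ℝ → ℝ) :
    ∫ p in S, g (p.1, -p.2) = ∫ p in S, g p := by
  have hpre : r2 ⁻¹' S = S := by
    ext p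
    constructor
    · intro hp
      have := hsym _ hp
      simpa [r2] using this
    · intro hp; exact hsym _ hp
  have h := r2_mp.setIntegral_preimage_emb r2_emb g S
  rw [hpre] at h
  exact h

lemma odd1 (S : Set (ℝ × ℝ)) (hsym : ∀ p ∈ S, (-p.1, p.2) ∈ S) (H : ℝ × ℝ → ℝ)
    (hH : ∀ p : ℝ × ℝ, H (-p.1, p.2) = -H p) : ∫ p in S, H p = 0 := by
  have h := setIntegral_r1 S hsym H
  simp only [hH] at h
  rw [integral_neg] at h
  linarith

lemma odd2 (S : Set (ℝ × ℝ)) (hsym : ∀ p ∈ S, (p.1, -p.2) ∈ S) (H : ℝ × ℝ → ℝ)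
    (hH : ∀ p : ℝ × ℝ, H (p.1, -p.2) = -H p) : ∫ p in S, H p = 0 := by
  have h := setIntegral_r2 S hsym H
  simp only [hH] at h
  rw [integral_neg] at h
  linarith

/-! Null sets -/

lemma null1 : volume {p : ℝ × ℝ | p.1 = 0} = 0 := by
  have h : {p : ℝ × ℝ | p.1 = 0} = ({0} : Set ℝ) ×ˢ (Set.univ : Set ℝ) := by
    ext p
    simp only [Set.mem_setOf_eq, Set.mem_prod, Set.mem_singleton_iff, Set.mem_univ, and_true]
  rw [h, Measure.volume_eq_prod, Measure.prod_prod]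
  simp

lemma null2 : volume {p : ℝ × ℝ | p.2 = 0} = 0 := by
  have h : {p : ℝ × ℝ | p.2 = 0} = (Set.univ : Set ℝ) ×ˢ ({0} : Set ℝ) := by
    ext p
    simp only [Set.mem_setOf_eq, Set.mem_prod, Set.mem_singleton_iff, Set.mem_univ, true_and]
  rw [h, Measure.volume_eq_prod, Measure.prod_prod]
  simp

lemma ae_ne_zero : ∀ᵐ p : ℝ × ℝ, p.1 ≠ 0 ∧ p.2 ≠ 0 := by
  have h : volume ({p : ℝ × ℝ | p.1 = 0} ∪ {p : ℝ × ℝ | p.2 = 0}) = 0 :=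
    measure_union_null null1 null2
  rw [ae_iff]
  refine measure_mono_null ?_ h
  intro p hp
  simp only [Set.mem_setOf_eq, not_and_or, not_not] at hp
  simpa [Set.mem_union] using hp

/-! Halving lemmas -/

lemma half1 (S : Set (ℝ × ℝ)) (hS : MeasurableSet S)
    (hsym : ∀ p ∈ S, (-p.1, p.2) ∈ S)
    (H : ℝ × ℝ → ℝ) (hH : ∀ p : ℝ × ℝ, H (-p.1, p.2) = H p)
    (hint : IntegrableOn H (S ∩ {p | 0 ≤ p.1})) :
    IntegrableOn H S ∧ ∫ p in S, H p = 2 * ∫ p in S ∩ {p | 0 ≤ p.1}, H p := by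
  have hmB : MeasurableSet (S ∩ {p : ℝ × ℝ | p.1 < 0}) :=
    hS.inter (measurableSet_lt measurable_fst measurable_const)
  have hpre : r1 ⁻¹' (S ∩ {p | 0 ≤ p.1}) = S ∩ {p : ℝ × ℝ | p.1 ≤ 0} := by
    ext p
    simp only [Set.mem_preimage, Set.mem_inter_iff, Set.mem_setOf_eq, r1]
    constructor
    · rintro ⟨h1, h2⟩
      refine ⟨by simpa using hsym _ h1, by linarith⟩
    · rintro ⟨h1, h2⟩
      exact ⟨hsym _ h1, by linarith⟩
  have hHr : H ∘ r1 = H := funext fun p => hH p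
  have hintC : IntegrableOn H (S ∩ {p : ℝ × ℝ | p.1 ≤ 0}) := by
    rw [← hpre]
    have h := (r1_mp.integrableOn_comp_preimage r1_emb
      (f := H) (s := S ∩ {p | 0 ≤ p.1}))
    rw [hHr] at h
    exact h.mpr hint
  have hintB : IntegrableOn H (S ∩ {p : ℝ × ℝ | p.1 < 0}) :=
    hintC.mono_set (fun p hp => ⟨hp.1, show p.1 ≤ 0 from le_of_lt hp.2⟩)
  have hunion : S = (S ∩ {p | 0 ≤ p.1}) ∪ (S ∩ {p : ℝ × ℝ | p.1 < 0}) := by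
    ext p
    simp only [Set.mem_union, Set.mem_inter_iff, Set.mem_setOf_eq]
    constructor
    · intro hp
      rcases le_or_gt 0 p.1 with h | h
      · exact Or.inl ⟨hp, h⟩
      · exact Or.inr ⟨hp, h⟩
    · rintro (⟨hp, _⟩ | ⟨hp, _⟩) <;> exact hp
  have hdisj : Disjoint (S ∩ {p : ℝ × ℝ | 0 ≤ p.1}) (S ∩ {p : ℝ × ℝ | p.1 < 0}) := by
    rw [Set.disjoint_left]
    rintro p ⟨_, h2⟩ ⟨_, h4⟩
    simp only [Set.mem_setOf_eq] at h2 h4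
    exact absurd h4 (not_lt.mpr h2)
  have hBC : (S ∩ {p : ℝ × ℝ | p.1 < 0} : Set (ℝ × ℝ)) =ᵐ[volume]
      (S ∩ {p : ℝ × ℝ | p.1 ≤ 0} : Set (ℝ × ℝ)) := by
    rw [MeasureTheory.ae_eq_set]
    constructor
    · have hsub : (S ∩ {p : ℝ × ℝ | p.1 < 0}) \ (S ∩ {p : ℝ × ℝ | p.1 ≤ 0}) = ∅ :=
        Set.diff_eq_empty.mpr
          (Set.inter_subset_inter_right S (fun p hp => show p.1 ≤ 0 from le_of_lt hp))
      rw [hsub]; simp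
    · refine measure_mono_null ?_ null1
      rintro p ⟨⟨_, h2⟩, h3⟩
      simp only [Set.mem_inter_iff, Set.mem_setOf_eq, not_and, not_lt] at h3
      simp only [Set.mem_setOf_eq] at h2 ⊢
      rcases lt_or_eq_of_le h2 with h | h
      · exact absurd (h3 ‹p ∈ S›) (not_le.mpr h)
      · exact h
  have hBA : ∫ p in S ∩ {p : ℝ × ℝ | p.1 < 0}, H p = ∫ p in S ∩ {p | 0 ≤ p.1}, H p := by
    rw [setIntegral_congr_set hBC, ← hpre]
    have h := r1_mp.setIntegral_preimage_emb r1_emb H (S ∩ {p | 0 ≤ p.1})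
    rw [← h]
    refine integral_congr_ae (Filter.Eventually.of_forall fun p => ?_)
    exact (hH p).symm
  constructor
  · rw [hunion]; exact hint.union hintB
  · conv_lhs => rw [hunion]
    rw [setIntegral_union hdisj hmB hint hintB, hBA]
    ring

lemma half2 (S : Set (ℝ × ℝ)) (hS : MeasurableSet S)
    (hsym : ∀ p ∈ S, (p.1, -p.2) ∈ S)
    (H : ℝ × ℝ → ℝ) (hH : ∀ p : ℝ × ℝ, H (p.1, -p.2) = H p)
    (hint : IntegrableOn H (S ∩ {p | 0 ≤ p.2})) :
    IntegrableOn H S ∧ ∫ p in S, H p = 2 * ∫ p in S ∩ {p | 0 ≤ p.2}, H p := by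
  have hmB : MeasurableSet (S ∩ {p : ℝ × ℝ | p.2 < 0}) :=
    hS.inter (measurableSet_lt measurable_snd measurable_const)
  have hpre : r2 ⁻¹' (S ∩ {p | 0 ≤ p.2}) = S ∩ {p : ℝ × ℝ | p.2 ≤ 0} := by
    ext p
    simp only [Set.mem_preimage, Set.mem_inter_iff, Set.mem_setOf_eq, r2]
    constructor
    · rintro ⟨h1, h2⟩
      refine ⟨by simpa using hsym _ h1, by linarith⟩
    · rintro ⟨h1, h2⟩
      exact ⟨hsym _ h1, by linarith⟩
  have hHr : H ∘ r2 = H := funext fun p => hH p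
  have hintC : IntegrableOn H (S ∩ {p : ℝ × ℝ | p.2 ≤ 0}) := by
    rw [← hpre]
    have h := (r2_mp.integrableOn_comp_preimage r2_emb
      (f := H) (s := S ∩ {p | 0 ≤ p.2}))
    rw [hHr] at h
    exact h.mpr hint
  have hintB : IntegrableOn H (S ∩ {p : ℝ × ℝ | p.2 < 0}) :=
    hintC.mono_set (fun p hp => ⟨hp.1, show p.2 ≤ 0 from le_of_lt hp.2⟩)
  have hunion : S = (S ∩ {p | 0 ≤ p.2}) ∪ (S ∩ {p : ℝ × ℝ | p.2 < 0}) := by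
    ext p
    simp only [Set.mem_union, Set.mem_inter_iff, Set.mem_setOf_eq]
    constructor
    · intro hp
      rcases le_or_gt 0 p.2 with h | h
      · exact Or.inl ⟨hp, h⟩
      · exact Or.inr ⟨hp, h⟩
    · rintro (⟨hp, _⟩ | ⟨hp, _⟩) <;> exact hp
  have hdisj : Disjoint (S ∩ {p : ℝ × ℝ | 0 ≤ p.2}) (S ∩ {p : ℝ × ℝ | p.2 < 0}) := by
    rw [Set.disjoint_left]
    rintro p ⟨_, h2⟩ ⟨_, h4⟩
    simp only [Set.mem_setOf_eq] at h2 h4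
    exact absurd h4 (not_lt.mpr h2)
  have hBC : (S ∩ {p : ℝ × ℝ | p.2 < 0} : Set (ℝ × ℝ)) =ᵐ[volume]
      (S ∩ {p : ℝ × ℝ | p.2 ≤ 0} : Set (ℝ × ℝ)) := by
    rw [MeasureTheory.ae_eq_set]
    constructor
    · have hsub : (S ∩ {p : ℝ × ℝ | p.2 < 0}) \ (S ∩ {p : ℝ × ℝ | p.2 ≤ 0}) = ∅ :=
        Set.diff_eq_empty.mpr
          (Set.inter_subset_inter_right S (fun p hp => show p.2 ≤ 0 from le_of_lt hp))
      rw [hsub]; simp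
    · refine measure_mono_null ?_ null2
      rintro p ⟨⟨_, h2⟩, h3⟩
      simp only [Set.mem_inter_iff, Set.mem_setOf_eq, not_and, not_lt] at h3
      simp only [Set.mem_setOf_eq] at h2 ⊢
      rcases lt_or_eq_of_le h2 with h | h
      · exact absurd (h3 ‹p ∈ S›) (not_le.mpr h)
      · exact h
  have hBA : ∫ p in S ∩ {p : ℝ × ℝ | p.2 < 0}, H p = ∫ p in S ∩ {p | 0 ≤ p.2}, H p := by
    rw [setIntegral_congr_set hBC, ← hpre]
    have h := r2_mp.setIntegral_preimage_emb r2_emb H (S ∩ {p | 0 ≤ p.2})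
    rw [← h]
    refine integral_congr_ae (Filter.Eventually.of_forall fun p => ?_)
    exact (hH p).symm
  constructor
  · rw [hunion]; exact hint.union hintB
  · conv_lhs => rw [hunion]
    rw [setIntegral_union hdisj hmB hint hintB, hBA]
    ring

lemma even4 (S : Set (ℝ × ℝ)) (hS : MeasurableSet S)
    (hsym1 : ∀ p ∈ S, (-p.1, p.2) ∈ S) (hsym2 : ∀ p ∈ S, (p.1, -p.2) ∈ S)
    (H : ℝ × ℝ → ℝ) (hH1 : ∀ p : ℝ × ℝ, H (-p.1, p.2) = H p)
    (hH2 : ∀ p : ℝ × ℝ, H (p.1, -p.2) = H p)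
    (hint : IntegrableOn H (S ∩ {p | 0 ≤ p.1} ∩ {p | 0 ≤ p.2})) :
    ∫ p in S, H p = 4 * ∫ p in S ∩ {p | 0 ≤ p.1} ∩ {p | 0 ≤ p.2}, H p := by
  have hS1 : MeasurableSet (S ∩ {p : ℝ × ℝ | 0 ≤ p.1}) :=
    hS.inter (measurableSet_le measurable_const measurable_fst)
  have hsym2' : ∀ p ∈ S ∩ {p : ℝ × ℝ | 0 ≤ p.1}, (p.1, -p.2) ∈ S ∩ {p : ℝ × ℝ | 0 ≤ p.1} :=
    fun p hp => ⟨hsym2 _ hp.1, hp.2⟩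
  obtain ⟨hint1, heq2⟩ := half2 (S ∩ {p | 0 ≤ p.1}) hS1 hsym2' H hH2 hint
  obtain ⟨_, heq1⟩ := half1 S hS hsym1 H hH1 hint1
  rw [heq1, heq2]
  ring

/-! rpow facts -/

lemma rpow_sq_half {x : ℝ} (hx : 0 < x) : ((x ^ 2 : ℝ)) ^ ((1 : ℝ) / 2) = x := by
  rw [← Real.rpow_natCast x 2, ← Real.rpow_mul hx.le]
  norm_num

lemma rpow_sq_neg_half {x : ℝ} (hx : 0 < x) : ((x ^ 2 : ℝ)) ^ (-((1 : ℝ) / 2)) = x⁻¹ := by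
  rw [← Real.rpow_natCast x 2, ← Real.rpow_mul hx.le]
  norm_num [Real.rpow_neg_one]

/-! Parity multipliers -/

def mm (ε : Bool × Bool) (p : ℝ × ℝ) : ℝ :=
  (cond ε.1 (p.1 ^ 2) 1) * (cond ε.2 (p.2 ^ 2) 1)

def nn (ε : Bool × Bool) (p : ℝ × ℝ) : ℝ :=
  (cond ε.1 p.1 1) * (cond ε.2 p.2 1)

lemma nn_sq (ε : Bool × Bool) (p : ℝ × ℝ) : nn ε p * nn ε p = mm ε p := by
  rcases ε with ⟨b1, b2⟩
  cases b1 <;> cases b2 <;> simp [nn, mm] <;> ring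

lemma mm_neg1 (ε : Bool × Bool) (p : ℝ × ℝ) : mm ε (-p.1, p.2) = mm ε p := by
  rcases ε with ⟨b1, b2⟩
  cases b1 <;> cases b2 <;> simp [mm]

lemma mm_neg2 (ε : Bool × Bool) (p : ℝ × ℝ) : mm ε (p.1, -p.2) = mm ε p := by
  rcases ε with ⟨b1, b2⟩
  cases b1 <;> cases b2 <;> simp [mm]

lemma nn_neg1 (ε : Bool × Bool) (p : ℝ × ℝ) :
    nn ε (-p.1, p.2) = (cond ε.1 (-1 : ℝ) 1) * nn ε p := by
  rcases ε with ⟨b1, b2⟩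
  cases b1 <;> cases b2 <;> simp [nn] <;> ring

lemma nn_neg2 (ε : Bool × Bool) (p : ℝ × ℝ) :
    nn ε (p.1, -p.2) = (cond ε.2 (-1 : ℝ) 1) * nn ε p := by
  rcases ε with ⟨b1, b2⟩
  cases b1 <;> cases b2 <;> simp [nn] <;> ring

lemma sqmap_neg1 (p : ℝ × ℝ) : sqmap (-p.1, p.2) = sqmap p := by
  simp [sqmap]

lemma sqmap_neg2 (p : ℝ × ℝ) : sqmap (p.1, -p.2) = sqmap p := by
  simp [sqmap]

end FSOB

open FSOB

/-- On a bounded fully symmetric domain `Ω ⊆ ℝ²`, the four families of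
functions obtained from orthonormal families with respect to the weights
`w_{±1/2,±1/2}(s,t) = s^{±1/2} t^{±1/2} w(s,t)` on `√Ω` form together an orthonormal
system with respect to `⟨F,G⟩_W = b_W ∫_Ω F G W`. -/
theorem fully_symmetric_orthonormal_basis
    (Ω : Set (ℝ × ℝ)) (hΩmeas : MeasurableSet Ω)
    (hΩbdd : Bornology.IsBounded Ω) (hΩpos : 0 < volume Ω)
    (hΩsym : ∀ p : ℝ × ℝ, p ∈ Ω →
      (-p.1, p.2) ∈ Ω ∧ (p.1, -p.2) ∈ Ω ∧ (-p.1, -p.2) ∈ Ω)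
    (sqΩ : Set (ℝ × ℝ))
    (hsqΩ : sqΩ = (fun p : ℝ × ℝ => (p.1 ^ 2, p.2 ^ 2)) ''
      (Ω ∩ {p : ℝ × ℝ | 0 ≤ p.1 ∧ 0 ≤ p.2}))
    (w : ℝ × ℝ → ℝ) (hw_meas : Measurable w)
    (hw_nonneg : ∀ p ∈ sqΩ, 0 ≤ w p)
    -- the exponent associated to a sign: `true` codes `1/2`, `false` codes `-1/2`
    (sgn : Bool → ℝ) (hsgn_true : sgn true = (1 : ℝ) / 2)
    (hsgn_false : sgn false = -((1 : ℝ) / 2))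
    -- the weights `w_ε` on `√Ω`
    (wε : Bool × Bool → ℝ × ℝ → ℝ)
    (hwε : ∀ ε p, wε ε p = p.1 ^ sgn ε.1 * p.2 ^ sgn ε.2 * w p)
    (hInt : ∀ ε, IntegrableOn (wε ε) sqΩ)
    (hIntPos : ∀ ε, 0 < ∫ p in sqΩ, wε ε p)
    -- the normalization constants
    (bcoef : Bool × Bool → ℝ)
    (hbcoef : ∀ ε, bcoef ε = (∫ p in sqΩ, wε ε p)⁻¹)
    (W : ℝ × ℝ → ℝ) (hW : ∀ p : ℝ × ℝ, W p = w (p.1 ^ 2, p.2 ^ 2))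
    (bW : ℝ) (hbW : bW = (∫ p in Ω, W p)⁻¹)
    -- for each sign pair, a family of measurable functions orthonormal w.r.t. `⟨·,·⟩_ε`
    (A : Bool × Bool → Type*)
    (P : ∀ ε, A ε → ℝ × ℝ → ℝ)
    (hPmeas : ∀ ε α, Measurable (P ε α))
    (hON : ∀ ε (α α' : A ε),
      bcoef ε * ∫ p in sqΩ, P ε α p * P ε α' p * wε ε p
        = if α = α' then 1 else 0)
    -- the four families of functions on `Ω`
    (Pfull : ∀ ε, A ε → ℝ × ℝ → ℝ)
    (hEE : ∀ (α : A (false, false)) (p : ℝ × ℝ),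
      Pfull (false, false) α p = P (false, false) α (p.1 ^ 2, p.2 ^ 2))
    (hOO : ∀ (α : A (true, true)) (p : ℝ × ℝ),
      Pfull (true, true) α p
        = Real.sqrt (bcoef (true, true) / bW) * (p.1 * p.2) *
            P (true, true) α (p.1 ^ 2, p.2 ^ 2))
    (hEO : ∀ (α : A (false, true)) (p : ℝ × ℝ),
      Pfull (false, true) α p
        = Real.sqrt (bcoef (false, true) / bW) * p.2 *
            P (false, true) α (p.1 ^ 2, p.2 ^ 2))
    (hOE : ∀ (α : A (true, false)) (p : ℝ × ℝ),
      Pfull (true, false) α p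
        = Real.sqrt (bcoef (true, false) / bW) * p.1 *
            P (true, false) α (p.1 ^ 2, p.2 ^ 2)) :
    -- the combined family is orthonormal with respect to `⟨·,·⟩_W`
    ∀ x y : Σ ε : Bool × Bool, A ε,
      bW * ∫ p in Ω, Pfull x.1 x.2 p * Pfull y.1 y.2 p * W p
        = if x = y then 1 else 0 := by
  -- Basic symmetry facts
  have hsym1 : ∀ p ∈ Ω, (-p.1, p.2) ∈ Ω := fun p hp => (hΩsym p hp).1
  have hsym2 : ∀ p ∈ Ω, (p.1, -p.2) ∈ Ω := fun p hp => (hΩsym p hp).2.1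
  -- The positive quadrant part of Ω
  have hΩp_eq : Ω ∩ {p : ℝ × ℝ | 0 ≤ p.1 ∧ 0 ≤ p.2}
      = Ω ∩ {p : ℝ × ℝ | 0 ≤ p.1} ∩ {p : ℝ × ℝ | 0 ≤ p.2} := by
    ext p
    simp only [Set.mem_inter_iff, Set.mem_setOf_eq]
    tauto
  have hΩpm : MeasurableSet (Ω ∩ {p : ℝ × ℝ | 0 ≤ p.1} ∩ {p : ℝ × ℝ | 0 ≤ p.2}) :=
    (hΩmeas.inter (measurableSet_le measurable_const measurable_fst)).inter
      (measurableSet_le measurable_const measurable_snd)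
  have hΩppos : ∀ p ∈ Ω ∩ {p : ℝ × ℝ | 0 ≤ p.1} ∩ {p : ℝ × ℝ | 0 ≤ p.2},
      0 ≤ p.1 ∧ 0 ≤ p.2 := fun p hp => ⟨hp.1.2, hp.2⟩
  have hsq : sqΩ = sqmap '' (Ω ∩ {p : ℝ × ℝ | 0 ≤ p.1} ∩ {p : ℝ × ℝ | 0 ≤ p.2}) := by
    rw [hsqΩ, hΩp_eq]; rfl
  have hsqm : MeasurableSet sqΩ := by
    rw [hsq]; exact measurableSet_sqmap_image hΩpm hΩppos
  -- measurability of the weights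
  have hwεm : ∀ ε, Measurable (wε ε) := by
    intro ε
    have h : wε ε = fun p : ℝ × ℝ => p.1 ^ sgn ε.1 * p.2 ^ sgn ε.2 * w p := funext (hwε ε)
    rw [h]
    fun_prop
  -- nonnegativity of the weights on sqΩ
  have hwε_nonneg : ∀ ε, ∀ p ∈ sqΩ, 0 ≤ wε ε p := by
    intro ε p hp
    have h0 : 0 ≤ p.1 ∧ 0 ≤ p.2 := by
      rw [hsq] at hp
      obtain ⟨q, _, rfl⟩ := hp
      exact ⟨sq_nonneg _, sq_nonneg _⟩
    rw [hwε]
    exact mul_nonneg (mul_nonneg (Real.rpow_nonneg h0.1 _) (Real.rpow_nonneg h0.2 _))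
      (hw_nonneg p hp)
  -- the pointwise change-of-variables identity
  have hpt : ∀ (ε : Bool × Bool) (f : ℝ × ℝ → ℝ) (p : ℝ × ℝ), 0 < p.1 → 0 < p.2 →
      |2 * p.1 * (2 * p.2)| * (f (sqmap p) * wε ε (sqmap p))
        = 4 * (mm ε p * f (sqmap p) * W p) := by
    intro ε f p h1 h2
    have habs : |2 * p.1 * (2 * p.2)| = 4 * (p.1 * p.2) := by
      rw [abs_of_pos (by positivity)]; ring
    rw [habs, hwε, hW]
    show 4 * (p.1 * p.2) * (f (sqmap p) *
        ((p.1 ^ 2) ^ sgn ε.1 * (p.2 ^ 2) ^ sgn ε.2 * w (p.1 ^ 2, p.2 ^ 2)))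
      = 4 * (mm ε p * f (sqmap p) * w (p.1 ^ 2, p.2 ^ 2))
    rcases ε with ⟨b1, b2⟩
    cases b1 <;> cases b2 <;>
      simp only [hsgn_true, hsgn_false, mm, Bool.cond_true, Bool.cond_false]
    · rw [rpow_sq_neg_half h1, rpow_sq_neg_half h2]
      try field_simp
      try ring
    · rw [rpow_sq_neg_half h1, rpow_sq_half h2]
      try field_simp
      try ring
    · rw [rpow_sq_half h1, rpow_sq_neg_half h2]
      try field_simp
      try ring
    · rw [rpow_sq_half h1, rpow_sq_half h2]
      try field_simp
      try ring
  -- the key change-of-variables identity for integrals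
  have key : ∀ (ε : Bool × Bool) (f : ℝ × ℝ → ℝ),
      ∫ p in sqΩ, f p * wε ε p
        = 4 * ∫ p in Ω ∩ {p : ℝ × ℝ | 0 ≤ p.1} ∩ {p : ℝ × ℝ | 0 ≤ p.2},
            mm ε p * f (sqmap p) * W p := by
    intro ε f
    rw [hsq, FSOB.cov hΩpm hΩppos (fun p => f p * wε ε p), ← integral_const_mul]
    refine setIntegral_congr_ae hΩpm ?_
    filter_upwards [FSOB.ae_ne_zero] with p hp hpmem
    have h1 : 0 < p.1 := lt_of_le_of_ne (hΩppos p hpmem).1 (Ne.symm hp.1)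
    have h2 : 0 < p.2 := lt_of_le_of_ne (hΩppos p hpmem).2 (Ne.symm hp.2)
    exact hpt ε f p h1 h2
  -- the key integrability transfer
  have keyInt : ∀ (ε : Bool × Bool) (f : ℝ × ℝ → ℝ),
      IntegrableOn (fun p => f p * wε ε p) sqΩ →
      IntegrableOn (fun p => mm ε p * f (sqmap p) * W p)
        (Ω ∩ {p : ℝ × ℝ | 0 ≤ p.1} ∩ {p : ℝ × ℝ | 0 ≤ p.2}) := by
    intro ε f hf
    rw [hsq, FSOB.covInt hΩpm hΩppos] at hf
    have h4 : IntegrableOn (fun p => 4 * (mm ε p * f (sqmap p) * W p))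
        (Ω ∩ {p : ℝ × ℝ | 0 ≤ p.1} ∩ {p : ℝ × ℝ | 0 ≤ p.2}) := by
      refine hf.congr ?_
      refine (ae_restrict_iff' hΩpm).2 ?_
      filter_upwards [FSOB.ae_ne_zero] with p hp hpmem
      have h1 : 0 < p.1 := lt_of_le_of_ne (hΩppos p hpmem).1 (Ne.symm hp.1)
      have h2 : 0 < p.2 := lt_of_le_of_ne (hΩppos p hpmem).2 (Ne.symm hp.2)
      exact hpt ε f p h1 h2
    have h5 := h4.const_mul ((4 : ℝ)⁻¹)
    refine h5.congr (Filter.Eventually.of_forall fun p => ?_)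
    show (4 : ℝ)⁻¹ * (4 * (mm ε p * f (sqmap p) * W p)) = _
    ring
  -- W is even
  have hW_even1 : ∀ p : ℝ × ℝ, W (-p.1, p.2) = W p := by
    intro p
    have h : ((-p.1) ^ 2 : ℝ) = p.1 ^ 2 := by ring
    rw [hW, hW]
    simp only [h]
  have hW_even2 : ∀ p : ℝ × ℝ, W (p.1, -p.2) = W p := by
    intro p
    have h : ((-p.2) ^ 2 : ℝ) = p.2 ^ 2 := by ring
    rw [hW, hW]
    simp only [h]
  -- integrability of W on the positive quadrant part
  have hIntW : IntegrableOn W (Ω ∩ {p : ℝ × ℝ | 0 ≤ p.1} ∩ {p : ℝ × ℝ | 0 ≤ p.2}) := by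
    have h1 : IntegrableOn (fun p => (1 : ℝ) * wε (false, false) p) sqΩ := by
      refine (hInt (false, false)).congr ?_
      exact Filter.Eventually.of_forall fun p => by simp
    have h2 := keyInt (false, false) (fun _ => (1 : ℝ)) h1
    refine h2.congr (Filter.Eventually.of_forall fun p => ?_)
    simp [mm]
  -- the fundamental relation between ∫_Ω W and ∫_sqΩ w_EE
  have hWeq : ∫ p in Ω, W p = ∫ p in sqΩ, wε (false, false) p := by
    have h1 := key (false, false) (fun _ => (1 : ℝ))
    have h2 := even4 Ω hΩmeas hsym1 hsym2 W hW_even1 hW_even2 hIntW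
    rw [h2]
    rw [show (∫ p in sqΩ, wε (false, false) p)
        = ∫ p in sqΩ, (fun _ : ℝ × ℝ => (1:ℝ)) p * wε (false, false) p from by
      refine setIntegral_congr_ae hsqm ?_
      exact Filter.Eventually.of_forall fun p _ => by simp]
    rw [h1]
    congr 1
    refine setIntegral_congr_ae hΩpm ?_
    refine Filter.Eventually.of_forall fun p _ => ?_
    simp [mm]
  have hbWpos : 0 < bW := by
    rw [hbW]
    rw [hWeq]
    exact inv_pos.mpr (hIntPos _)
  have hbWne : bW ≠ 0 := ne_of_gt hbWpos
  have hbcpos : ∀ ε, 0 < bcoef ε := fun ε => by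
    rw [hbcoef]; exact inv_pos.mpr (hIntPos ε)
  have hbEE : bcoef (false, false) = bW := by
    rw [hbcoef, hbW, hWeq]
  -- uniform representation of Pfull
  have hPfull : ∀ (ε : Bool × Bool) (a : A ε) (p : ℝ × ℝ),
      Pfull ε a p = Real.sqrt (bcoef ε / bW) * nn ε p * P ε a (sqmap p) := by
    rintro ⟨b1, b2⟩ a p
    cases b1 <;> cases b2
    · rw [hEE]
      have h1 : bcoef (false, false) / bW = 1 := by
        rw [hbEE]; field_simp
      rw [h1, Real.sqrt_one]
      simp [nn, sqmap]
    · rw [hEO]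
      simp only [nn, sqmap, Bool.cond_true, Bool.cond_false]
      ring
    · rw [hOE]
      simp only [nn, sqmap, Bool.cond_true, Bool.cond_false]
      ring
    · rw [hOO]
      simp only [nn, sqmap, Bool.cond_true, Bool.cond_false]
      try ring
  have hsqc : ∀ ε : Bool × Bool, Real.sqrt (bcoef ε / bW) ^ 2 = bcoef ε / bW := by
    intro ε
    exact Real.sq_sqrt (le_of_lt (div_pos (hbcpos ε) hbWpos))
  -- parity of Pfull
  have hodd1 : ∀ (ε : Bool × Bool) (a : A ε) (p : ℝ × ℝ),
      Pfull ε a (-p.1, p.2) = (cond ε.1 (-1 : ℝ) 1) * Pfull ε a p := by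
    intro ε a p
    rw [hPfull, hPfull, sqmap_neg1, nn_neg1]
    ring
  have hodd2 : ∀ (ε : Bool × Bool) (a : A ε) (p : ℝ × ℝ),
      Pfull ε a (p.1, -p.2) = (cond ε.2 (-1 : ℝ) 1) * Pfull ε a p := by
    intro ε a p
    rw [hPfull, hPfull, sqmap_neg2, nn_neg2]
    ring
  -- Main proof
  rintro ⟨ε, α⟩ ⟨ε', α'⟩
  by_cases hεε : ε = ε'
  · subst hεε
    have hif : (if (⟨ε, α⟩ : Σ ε, A ε) = ⟨ε, α'⟩ then (1 : ℝ) else 0)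
        = if α = α' then 1 else 0 := by simp
    show bW * ∫ p in Ω, Pfull ε α p * Pfull ε α' p * W p
        = if (⟨ε, α⟩ : Σ ε, A ε) = ⟨ε, α'⟩ then 1 else 0
    rw [hif, ← hON ε α α']
    -- integrability of the diagonal products
    have hdiag : ∀ β : A ε, IntegrableOn (fun p => P ε β p * P ε β p * wε ε p) sqΩ := by
      intro β
      by_contra hc
      have h0 := integral_undef hc
      have h1 := hON ε β β
      rw [h0] at h1
      simp at h1
    have hfint : IntegrableOn (fun p => (P ε α p * P ε α' p) * wε ε p) sqΩ := by
      refine Integrable.mono' ((hdiag α).add (hdiag α')) ?_ ?_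
      · exact (((hPmeas ε α).mul (hPmeas ε α')).mul (hwεm ε)).aestronglyMeasurable
      · refine (ae_restrict_iff' hsqm).2 (Filter.Eventually.of_forall fun p hp => ?_)
        have hw0 := hwε_nonneg ε p hp
        rw [Real.norm_eq_abs, abs_mul, abs_of_nonneg hw0]
        have hb : |P ε α p * P ε α' p|
            ≤ P ε α p * P ε α p + P ε α' p * P ε α' p := by
          have h := abs_mul (P ε α p) (P ε α' p)
          nlinarith [sq_nonneg (|P ε α p| - |P ε α' p|), sq_abs (P ε α p),
            sq_abs (P ε α' p), abs_nonneg (P ε α p), abs_nonneg (P ε α' p)]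
        calc |P ε α p * P ε α' p| * wε ε p
            ≤ (P ε α p * P ε α p + P ε α' p * P ε α' p) * wε ε p :=
              mul_le_mul_of_nonneg_right hb hw0
          _ = P ε α p * P ε α p * wε ε p + P ε α' p * P ε α' p * wε ε p := by ring
    have hmint : IntegrableOn
        (fun p => mm ε p * (P ε α (sqmap p) * P ε α' (sqmap p)) * W p)
        (Ω ∩ {p : ℝ × ℝ | 0 ≤ p.1} ∩ {p : ℝ × ℝ | 0 ≤ p.2}) :=
      keyInt ε (fun q => P ε α q * P ε α' q) hfint
    -- evenness of the transformed integrand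
    have hH1 : ∀ p : ℝ × ℝ,
        (fun p => mm ε p * (P ε α (sqmap p) * P ε α' (sqmap p)) * W p) (-p.1, p.2)
          = (fun p => mm ε p * (P ε α (sqmap p) * P ε α' (sqmap p)) * W p) p := by
      intro p
      simp only [mm_neg1, sqmap_neg1, hW_even1]
    have hH2 : ∀ p : ℝ × ℝ,
        (fun p => mm ε p * (P ε α (sqmap p) * P ε α' (sqmap p)) * W p) (p.1, -p.2)
          = (fun p => mm ε p * (P ε α (sqmap p) * P ε α' (sqmap p)) * W p) p := by
      intro p
      simp only [mm_neg2, sqmap_neg2, hW_even2]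
    have heven := even4 Ω hΩmeas hsym1 hsym2 _ hH1 hH2 hmint
    -- rewrite the Ω-integrand
    have hrw : ∫ p in Ω, Pfull ε α p * Pfull ε α' p * W p
        = (bcoef ε / bW) * ∫ p in Ω,
            mm ε p * (P ε α (sqmap p) * P ε α' (sqmap p)) * W p := by
      rw [← integral_const_mul]
      refine setIntegral_congr_ae hΩmeas (Filter.Eventually.of_forall fun p _ => ?_)
      rw [hPfull ε α, hPfull ε α']
      have hx : Real.sqrt (bcoef ε / bW) * nn ε p * P ε α (sqmap p) *
          (Real.sqrt (bcoef ε / bW) * nn ε p * P ε α' (sqmap p)) * W p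
          = Real.sqrt (bcoef ε / bW) ^ 2 *
            ((nn ε p * nn ε p) * (P ε α (sqmap p) * P ε α' (sqmap p)) * W p) := by
        ring
      rw [hx, hsqc, nn_sq]
      try ring
    have hkey := key ε (fun q => P ε α q * P ε α' q)
    rw [hrw, heven, ← hkey]
    try field_simp
    try ring
  · -- cross case: distinct sign patterns, orthogonality by odd symmetry
    have hxy : (⟨ε, α⟩ : Σ ε, A ε) ≠ ⟨ε', α'⟩ := by
      intro h
      exact hεε (congrArg Sigma.fst h)
    rw [if_neg hxy]
    have hcomp : ε.1 ≠ ε'.1 ∨ ε.2 ≠ ε'.2 := by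
      by_contra h
      push_neg at h
      exact hεε (Prod.ext h.1 h.2)
    rcases hcomp with h | h
    · have hoddH : ∀ p : ℝ × ℝ,
          (fun p => Pfull ε α p * Pfull ε' α' p * W p) (-p.1, p.2)
            = -(fun p => Pfull ε α p * Pfull ε' α' p * W p) p := by
        intro p
        simp only []
        rw [hodd1 ε α p, hodd1 ε' α' p, hW_even1]
        rcases hb1 : ε.1 <;> rcases hb2 : ε'.1
        · exact absurd (hb1.trans hb2.symm) h
        · simp only [Bool.cond_true, Bool.cond_false]; ring
        · simp only [Bool.cond_true, Bool.cond_false]; ring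
        · exact absurd (hb1.trans hb2.symm) h
      rw [odd1 Ω hsym1 _ hoddH, mul_zero]
    · have hoddH : ∀ p : ℝ × ℝ,
          (fun p => Pfull ε α p * Pfull ε' α' p * W p) (p.1, -p.2)
            = -(fun p => Pfull ε α p * Pfull ε' α' p * W p) p := by
        intro p
        simp only []
        rw [hodd2 ε α p, hodd2 ε' α' p, hW_even2]
        rcases hb1 : ε.2 <;> rcases hb2 : ε'.2
        · exact absurd (hb1.trans hb2.symm) h
        · simp only [Bool.cond_true, Bool.cond_false]; ring
        · simp only [Bool.cond_true, Bool.cond_false]; ring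
        · exact absurd (hb1.trans hb2.symm) h
      rw [odd2 Ω hsym2 _ hoddH, mul_zero]
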